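/- Let A ⊂ ℝᵖ be compact, s > d > 0, and suppose there is C > 0 with ℰ_s(A, N+1) ≤ ℰ_s(A, N) + C N^{s/d} for all N. Let 𝔐(k) be a strictly increasing sequence of integers along which ℰ_s(A, 𝔐(k))/𝔐(k)^{1+s/d} converges to a limit L, and let 𝔑(k) be a sequence of nonnegative integers with 𝔑(k) = o(𝔐(k)). Then ℰ_s(A, 𝔐(k)+𝔑(k))/(𝔐(k)+𝔑(k))^{1+s/d} → L as k → ∞. -/

import Mathlib

open Filter MeasureTheory Metric Real
open scoped BigOperators ENNReal NNReal Topology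

open Classical in
noncomputable def rieszEnergy {E : Type*} [PseudoMetricSpace E] (s : ℝ) (ω : Finset E) : ℝ :=
  ∑ x ∈ ω, ∑ y ∈ ω, if x ≠ y then dist x y ^ (-s) else 0

noncomputable def minRieszEnergy {E : Type*} [PseudoMetricSpace E] (s : ℝ) (A : Set E) (N : ℕ) : ℝ :=
  sInf {e : ℝ | ∃ ω : Finset E, ↑ω ⊆ A ∧ ω.card = N ∧ e = rieszEnergy s ω}
lemma energy_add_le (E : ℕ → ℝ) {s C : ℝ} (hs : 0 ≤ s) (hC : 0 ≤ C)
    (hinc : ∀ N : ℕ, E (N + 1) ≤ E N + C * (N : ℝ) ^ s) :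
    ∀ M N : ℕ, E (M + N) ≤ E M + C * N * ((M + N : ℕ) : ℝ) ^ s := by
  intro M N
  induction N with
  | zero => simp
  | succ N ih =>
    have h1 : E (M + N + 1) ≤ E (M + N) + C * ((M + N : ℕ) : ℝ) ^ s := hinc (M + N)
    have h2 : ((M + N : ℕ) : ℝ) ^ s ≤ ((M + (N + 1) : ℕ) : ℝ) ^ s :=
      Real.rpow_le_rpow (by positivity) (by push_cast; linarith) hs
    have h3 : E (M + (N + 1)) = E (M + N + 1) := rfl
    have hN : (0 : ℝ) ≤ (N : ℝ) := Nat.cast_nonneg N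
    have h4 : ((M + N : ℕ) : ℝ) ^ s ≥ 0 := Real.rpow_nonneg (by positivity) s
    push_cast at *
    nlinarith [mul_le_mul_of_nonneg_left h2 hC, mul_le_mul_of_nonneg_left h2 (mul_nonneg hC hN)]

/-- stability of the limit of normalized minimal energies under o(𝔐)
perturbations of the sequence of cardinalities. -/
theorem statement10 {p : ℕ} (s d C : ℝ) (hd : 0 < d) (hsd : d < s) (hC : 0 < C)
    (A : Set (EuclideanSpace ℝ (Fin p))) (hA : IsCompact A)
    (hmono : Monotone (minRieszEnergy s A))
    (hinc : ∀ N : ℕ, minRieszEnergy s A (N + 1) ≤ minRieszEnergy s A N + C * (N : ℝ) ^ (s / d))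
    (𝔐 : ℕ → ℕ) (h𝔐 : StrictMono 𝔐) (L : ℝ)
    (hL : Tendsto (fun k : ℕ => minRieszEnergy s A (𝔐 k) / ((𝔐 k : ℝ) ^ (1 + s / d)))
      atTop (nhds L))
    (𝔑 : ℕ → ℕ) (hsmall : Tendsto (fun k : ℕ => (𝔑 k : ℝ) / (𝔐 k : ℝ)) atTop (nhds 0)) :
    Tendsto (fun k : ℕ => minRieszEnergy s A (𝔐 k + 𝔑 k) /
      (((𝔐 k + 𝔑 k : ℕ) : ℝ) ^ (1 + s / d))) atTop (nhds L) := by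
  have hs0 : 0 < s := hd.trans hsd
  set h : ℝ := s / d with hh
  have hh0 : 0 < h := div_pos hs0 hd
  set e : ℝ := 1 + h with he'
  have he : 0 < e := by positivity
  set E := minRieszEnergy s A with hEdef
  have key := energy_add_le E hh0.le hC.le hinc
  set t : ℕ → ℝ := fun k => (𝔑 k : ℝ) / (𝔐 k : ℝ) with htdef
  have ht0 : Tendsto t atTop (nhds 0) := hsmall
  have h1t : Tendsto (fun k => (1 + t k)⁻¹) atTop (nhds 1) := by
    have h1 : Tendsto (fun k => 1 + t k) atTop (nhds 1) := by
      simpa using tendsto_const_nhds.add ht0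
    simpa using h1.inv₀ one_ne_zero
  have hρ : Tendsto (fun k => ((1 + t k)⁻¹) ^ e) atTop (nhds 1) := by
    simpa using h1t.rpow_const (Or.inl one_ne_zero)
  have hlow : Tendsto (fun k => (E (𝔐 k) / (𝔐 k : ℝ) ^ e) * ((1 + t k)⁻¹) ^ e)
      atTop (nhds L) := by
    simpa using hL.mul hρ
  have hn : Tendsto (fun k => C * (t k * (1 + t k)⁻¹)) atTop (nhds 0) := by
    simpa using (tendsto_const_nhds (x := C)).mul (ht0.mul h1t)
  have hup : Tendsto (fun k => (E (𝔐 k) / (𝔐 k : ℝ) ^ e) * ((1 + t k)⁻¹) ^ e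
      + C * (t k * (1 + t k)⁻¹)) atTop (nhds L) := by
    simpa using hlow.add hn
  refine tendsto_of_tendsto_of_tendsto_of_le_of_le' hlow hup ?_ ?_
  · filter_upwards [eventually_ge_atTop 1] with k hk
    have hM1 : 1 ≤ 𝔐 k := le_trans hk (h𝔐.le_apply)
    have hm : (1 : ℝ) ≤ (𝔐 k : ℝ) := by exact_mod_cast hM1
    have hm0 : (0 : ℝ) < (𝔐 k : ℝ) := by linarith
    have hn0 : (0 : ℝ) ≤ (𝔑 k : ℝ) := Nat.cast_nonneg _
    have hP0 : (0 : ℝ) < ((𝔐 k : ℝ) + (𝔑 k : ℝ)) := by linarith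
    have hcast : ((𝔐 k + 𝔑 k : ℕ) : ℝ) = (𝔐 k : ℝ) + (𝔑 k : ℝ) := by push_cast; ring
    have hinv : (1 + t k)⁻¹ = (𝔐 k : ℝ) / ((𝔐 k : ℝ) + (𝔑 k : ℝ)) := by
      rw [htdef]
      rw [show (1 : ℝ) + (𝔑 k : ℝ) / (𝔐 k : ℝ) = ((𝔐 k : ℝ) + (𝔑 k : ℝ)) / (𝔐 k : ℝ) by
        field_simp]
      rw [inv_div]
    have hrw : (E (𝔐 k) / (𝔐 k : ℝ) ^ e) * ((1 + t k)⁻¹) ^ e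
        = E (𝔐 k) / ((𝔐 k : ℝ) + (𝔑 k : ℝ)) ^ e := by
      rw [hinv, Real.div_rpow hm0.le hP0.le]
      have h1 : (𝔐 k : ℝ) ^ e ≠ 0 := by positivity
      field_simp
    rw [hrw, hcast]
    gcongr
    exact hmono (Nat.le_add_right _ _)
  · filter_upwards [eventually_ge_atTop 1] with k hk
    have hM1 : 1 ≤ 𝔐 k := le_trans hk (h𝔐.le_apply)
    have hm : (1 : ℝ) ≤ (𝔐 k : ℝ) := by exact_mod_cast hM1
    have hm0 : (0 : ℝ) < (𝔐 k : ℝ) := by linarith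
    have hn0 : (0 : ℝ) ≤ (𝔑 k : ℝ) := Nat.cast_nonneg _
    have hP0 : (0 : ℝ) < ((𝔐 k : ℝ) + (𝔑 k : ℝ)) := by linarith
    have hcast : ((𝔐 k + 𝔑 k : ℕ) : ℝ) = (𝔐 k : ℝ) + (𝔑 k : ℝ) := by push_cast; ring
    have hinv : (1 + t k)⁻¹ = (𝔐 k : ℝ) / ((𝔐 k : ℝ) + (𝔑 k : ℝ)) := by
      rw [htdef]
      rw [show (1 : ℝ) + (𝔑 k : ℝ) / (𝔐 k : ℝ) = ((𝔐 k : ℝ) + (𝔑 k : ℝ)) / (𝔐 k : ℝ) by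
        field_simp]
      rw [inv_div]
    have hrw : (E (𝔐 k) / (𝔐 k : ℝ) ^ e) * ((1 + t k)⁻¹) ^ e
        = E (𝔐 k) / ((𝔐 k : ℝ) + (𝔑 k : ℝ)) ^ e := by
      rw [hinv, Real.div_rpow hm0.le hP0.le]
      have h1 : (𝔐 k : ℝ) ^ e ≠ 0 := by positivity
      field_simp
    have hrw2 : C * (t k * (1 + t k)⁻¹) = C * ((𝔑 k : ℝ) / ((𝔐 k : ℝ) + (𝔑 k : ℝ))) := by
      rw [hinv, htdef]
      field_simp
    have hPe : ((𝔐 k : ℝ) + (𝔑 k : ℝ)) ^ e = ((𝔐 k : ℝ) + (𝔑 k : ℝ))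
        * ((𝔐 k : ℝ) + (𝔑 k : ℝ)) ^ h := by
      rw [he', Real.rpow_add hP0, Real.rpow_one]
    have hkey := key (𝔐 k) (𝔑 k)
    rw [hcast] at hkey
    have hPh : (0 : ℝ) < ((𝔐 k : ℝ) + (𝔑 k : ℝ)) ^ h := Real.rpow_pos_of_pos hP0 h
    rw [hrw, hrw2, hcast]
    have hstep : E (𝔐 k + 𝔑 k) / ((𝔐 k : ℝ) + (𝔑 k : ℝ)) ^ e
        ≤ (E (𝔐 k) + C * (𝔑 k : ℝ) * ((𝔐 k : ℝ) + (𝔑 k : ℝ)) ^ h)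
          / ((𝔐 k : ℝ) + (𝔑 k : ℝ)) ^ e := by
      gcongr
    refine hstep.trans (le_of_eq ?_)
    rw [hPe]
    field_simp
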